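/- For all real q, ρ with |q| < 1 and |ρ| < 1, all x, y ∈ S(q), and all integers m, k ≥ 0, define γ_{m,k}(x,y|ρ,q) = Σ_{j=0}^∞ (ρ^j/[j]_q!)·H_{j+m}(x|q)·H_{j+k}(y|q). Then γ_{m,k}(x,y|ρ,q) = γ_{0,0}(x,y|ρ,q)·Q_{m,k}(x,y|ρ,q), where Q_{m,k}(x,y|ρ,q) = Σ_{s=0}^{k} (−1)^s·q^{s(s−1)/2}·[k choose s]_q·ρ^s·H_{k−s}(y|q)·P_{m+s}(x|y,ρ,q)/(ρ²;q)_{m+s}; moreover Q_{m,k}(x,y|ρ,q) = Q_{k,m}(y,x|ρ,q). -/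

import Mathlib

noncomputable section

open Finset

/-- The q-integer `[n]_q = 1 + q + ⋯ + q^{n-1}`. -/
def qInt (q : ℝ) (n : ℕ) : ℝ := ∑ i ∈ Finset.range n, q ^ i

/-- The q-factorial `[n]_q!`. -/
def qFact (q : ℝ) (n : ℕ) : ℝ := ∏ j ∈ Finset.range n, qInt q (j + 1)

/-- The q-binomial coefficient. -/
def qBinom (q : ℝ) (n k : ℕ) : ℝ :=
  if k ≤ n then qFact q n / (qFact q (n - k) * qFact q k) else 0

/-- The finite q-Pochhammer symbol `(a;q)_n`. -/
def qPoch (a q : ℝ) (n : ℕ) : ℝ := ∏ j ∈ Finset.range n, (1 - a * q ^ j)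

/-- The infinite q-Pochhammer symbol `(a;q)_∞`. -/
def qPochInf (a q : ℝ) : ℝ := ∏' j : ℕ, (1 - a * q ^ j)

/-- The q-Hermite polynomials `H_n(x|q)`. -/
def qHermite (q : ℝ) : ℕ → ℝ → ℝ
  | 0, _ => 1
  | 1, x => x
  | n + 2, x => x * qHermite q (n + 1) x - qInt q (n + 1) * qHermite q n x

/-- The rescaled q-ultraspherical polynomials `R_n(x|β,q)`. -/
def qUltra (q β : ℝ) : ℕ → ℝ → ℝ
  | 0, _ => 1
  | 1, x => (1 - β) * x
  | n + 2, x => (1 - β * q ^ (n + 1)) * x * qUltra q β (n + 1) x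
      - (1 - β ^ 2 * q ^ n) * qInt q (n + 1) * qUltra q β n x

/-- The Al-Salam–Chihara polynomials `P_n(x|y,ρ,q)`. -/
def ASC (q y ρ : ℝ) : ℕ → ℝ → ℝ
  | 0, _ => 1
  | 1, x => x - ρ * y
  | n + 2, x => (x - ρ * y * q ^ (n + 1)) * ASC q y ρ (n + 1) x
      - (1 - ρ ^ 2 * q ^ n) * qInt q (n + 1) * ASC q y ρ n x

/-- The polynomials `B_n(y|q)` (q⁻¹-Hermite related). -/
def qB (q : ℝ) : ℕ → ℝ → ℝ
  | 0, _ => 1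
  | 1, y => -y
  | n + 2, y => -q ^ (n + 1) * y * qB q (n + 1) y + q ^ n * qInt q (n + 1) * qB q n y

/-- The big q-Hermite polynomials `H_n(x|a,q)`. -/
def bigqHermite (q a : ℝ) : ℕ → ℝ → ℝ
  | 0, _ => 1
  | 1, x => x - a
  | n + 2, x => (x - a * q ^ (n + 1)) * bigqHermite q a (n + 1) x
      - qInt q (n + 1) * bigqHermite q a n x

/-- The probabilistic Hermite polynomials `H_n(x)`. -/
def probHermite : ℕ → ℝ → ℝ
  | 0, _ => 1
  | 1, x => x
  | n + 2, x => x * probHermite (n + 1) x - (n + 1) * probHermite n x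

/-- The probabilistic Hermite polynomials on ℂ. -/
def probHermiteC : ℕ → ℂ → ℂ
  | 0, _ => 1
  | 1, x => x
  | n + 2, x => x * probHermiteC (n + 1) x - (n + 1) * probHermiteC n x

/-- The Chebyshev polynomials of the second kind. -/
def chebU : ℕ → ℝ → ℝ
  | 0, _ => 1
  | 1, x => 2 * x
  | n + 2, x => 2 * x * chebU (n + 1) x - chebU n x

/-- The Chebyshev polynomials of the first kind. -/
def chebT : ℕ → ℝ → ℝ
  | 0, _ => 1
  | 1, x => x
  | n + 2, x => 2 * x * chebT (n + 1) x - chebT n x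

/-- `W_k(x,y,t|q)`. -/
def Wk (q x y t : ℝ) (k : ℕ) : ℝ :=
  (1 - t ^ 2 * q ^ (2 * k)) ^ 2 - (1 - q) * x * y * t * q ^ k * (1 + t ^ 2 * q ^ (2 * k))
    + (1 - q) * t ^ 2 * q ^ (2 * k) * (x ^ 2 + y ^ 2)

/-- `V_k(x,a|q)`. -/
def Vk (q x a : ℝ) (k : ℕ) : ℝ :=
  1 - (1 - q) * a * x * q ^ k + (1 - q) * a ^ 2 * q ^ (2 * k)

/-- `L_k(x,a|q)`. -/
def Lk (q x a : ℝ) (k : ℕ) : ℝ :=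
  (1 + a * q ^ k) ^ 2 - (1 - q) * x ^ 2 * a ^ 2 * q ^ k

/-- The support interval `S(q) = [-2/√(1-q), 2/√(1-q)]` for `|q| < 1`. -/
def Sq (q : ℝ) : Set ℝ := Set.Icc (-(2 / Real.sqrt (1 - q))) (2 / Real.sqrt (1 - q))

/-- The polynomial `Q_{m,k}(x,y|ρ,q)`. -/
def Qmk (q ρ : ℝ) (m k : ℕ) (x y : ℝ) : ℝ :=
  ∑ s ∈ Finset.range (k + 1), (-1 : ℝ) ^ s * q ^ (s * (s - 1) / 2) * qBinom q k s * ρ ^ s *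
    qHermite q (k - s) y * ASC q y ρ (m + s) x / qPoch (ρ ^ 2) q (m + s)

/-- `γ_{m,k}(x,y|ρ,q)`. -/
def gammamk (q ρ : ℝ) (m k : ℕ) (x y : ℝ) : ℝ :=
  ∑' j : ℕ, ρ ^ j / qFact q j * qHermite q (j + m) x * qHermite q (j + k) y

namespace St14

variable {q : ℝ}

lemma qInt_zero : qInt q 0 = 0 := by simp [qInt]

lemma qInt_succ (n : ℕ) : qInt q (n + 1) = qInt q n + q ^ n := by
  simp [qInt, Finset.sum_range_succ]

lemma qInt_add (m n : ℕ) : qInt q (m + n) = qInt q m + q ^ m * qInt q n := by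
  unfold qInt
  rw [Finset.sum_range_add, Finset.mul_sum]
  congr 1
  exact Finset.sum_congr rfl fun i _ => (pow_add q m i)

lemma geom_qInt (n : ℕ) : (1 - q) * qInt q n = 1 - q ^ n := by
  have := geom_sum_mul q n
  unfold qInt
  nlinarith [this]

lemma qInt_pos (hq : |q| < 1) (n : ℕ) : 0 < qInt q (n + 1) := by
  have h1 : (1 - q) > 0 := by cases abs_lt.1 hq; linarith
  have h2 : q ^ (n+1) < 1 := by
    calc q ^ (n+1) ≤ |q ^ (n+1)| := le_abs_self _
    _ = |q| ^ (n+1) := by rw [abs_pow]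
    _ ≤ |q| := pow_le_of_le_one (abs_nonneg q) hq.le (by omega)
    _ < 1 := hq
  nlinarith [geom_qInt (q := q) (n+1)]

lemma qFact_succ (n : ℕ) : qFact q (n + 1) = qFact q n * qInt q (n + 1) := by
  simp [qFact, Finset.prod_range_succ]

lemma qFact_pos (hq : |q| < 1) (n : ℕ) : 0 < qFact q n :=
  Finset.prod_pos fun j _ => qInt_pos hq j

lemma qFact_ne (hq : |q| < 1) (n : ℕ) : qFact q n ≠ 0 := (qFact_pos hq n).ne'


lemma qFact_zero : qFact q 0 = 1 := by simp [qFact]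

lemma qBinom_zero (n : ℕ) (hq : |q| < 1) : qBinom q n 0 = 1 := by
  simp [qBinom, qFact_zero, qFact_ne hq]

lemma qBinom_self (n : ℕ) (hq : |q| < 1) : qBinom q n n = 1 := by
  simp [qBinom, qFact_zero, qFact_ne hq]

lemma qBinom_of_gt {n k : ℕ} (h : n < k) : qBinom q n k = 0 := by
  simp [qBinom, Nat.not_le.2 h]

lemma pascal1 (hq : |q| < 1) (n s : ℕ) :
    qBinom q (n+1) (s+1) = qBinom q n (s+1) + q^(n-s) * qBinom q n s := by
  rcases lt_trichotomy s n with h | rfl | h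
  · rcases Nat.exists_eq_add_of_lt h with ⟨d, rfl⟩
    have e1 : s + d + 1 + 1 - (s+1) = d + 1 := by omega
    have e2 : s + d + 1 - (s+1) = d := by omega
    have e3 : s + d + 1 - s = d + 1 := by omega
    simp only [qBinom, if_pos (by omega : s+1 ≤ s+d+1+1), if_pos (by omega : s+1 ≤ s+d+1),
      if_pos (by omega : s ≤ s+d+1), e1, e2, e3]
    have h5 : qInt q (s + d + 1 + 1) = qInt q (d+1) + q^(d+1) * qInt q (s+1) := by
      have h := qInt_add (q := q) (d+1) (s+1)
      rw [show d+1+(s+1) = s+d+1+1 by omega] at h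
      exact h
    rw [qFact_succ (s+d+1), qFact_succ d, qFact_succ s, h5]
    have n1 := qFact_ne hq (s+d+1); have n2 := qFact_ne hq d; have n3 := qFact_ne hq s
    have n4 := (qInt_pos hq d).ne'; have n5 := (qInt_pos hq s).ne'
    field_simp
    skip
  · simp [qBinom_self _ hq, qBinom_of_gt (Nat.lt_succ_self s)]
  · rw [qBinom_of_gt (by omega), qBinom_of_gt (by omega), qBinom_of_gt (by omega)]
    ring

lemma pascal2 (hq : |q| < 1) (n s : ℕ) :
    qBinom q (n+1) (s+1) = q^(s+1) * qBinom q n (s+1) + qBinom q n s := by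
  rcases lt_trichotomy s n with h | rfl | h
  · rcases Nat.exists_eq_add_of_lt h with ⟨d, rfl⟩
    have e1 : s + d + 1 + 1 - (s+1) = d + 1 := by omega
    have e2 : s + d + 1 - (s+1) = d := by omega
    have e3 : s + d + 1 - s = d + 1 := by omega
    simp only [qBinom, if_pos (by omega : s+1 ≤ s+d+1+1), if_pos (by omega : s+1 ≤ s+d+1),
      if_pos (by omega : s ≤ s+d+1), e1, e2, e3]
    have h5 : qInt q (s + d + 1 + 1) = qInt q (s+1) + q^(s+1) * qInt q (d+1) := by
      have h := qInt_add (q := q) (s+1) (d+1)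
      rw [show s+1+(d+1) = s+d+1+1 by omega] at h
      exact h
    rw [qFact_succ (s+d+1), qFact_succ d, qFact_succ s, h5]
    have n1 := qFact_ne hq (s+d+1); have n2 := qFact_ne hq d; have n3 := qFact_ne hq s
    have n4 := (qInt_pos hq d).ne'; have n5 := (qInt_pos hq s).ne'
    field_simp
    ring
  · simp [qBinom_self _ hq, qBinom_of_gt (Nat.lt_succ_self s)]
  · rw [qBinom_of_gt (by omega), qBinom_of_gt (by omega), qBinom_of_gt (by omega)]
    ring

/-- `[n-s]·[n,s] = [s+1]·[n,s+1]` -/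
lemma absorb (hq : |q| < 1) (n s : ℕ) :
    qInt q (n-s) * qBinom q n s = qInt q (s+1) * qBinom q n (s+1) := by
  rcases lt_trichotomy s n with h | rfl | h
  · rcases Nat.exists_eq_add_of_lt h with ⟨d, rfl⟩
    have e2 : s + d + 1 - (s+1) = d := by omega
    have e3 : s + d + 1 - s = d + 1 := by omega
    simp only [qBinom, if_pos (by omega : s+1 ≤ s+d+1), if_pos (by omega : s ≤ s+d+1), e2, e3]
    rw [qFact_succ d, qFact_succ s]
    have n1 := qFact_ne hq (s+d+1); have n2 := qFact_ne hq d; have n3 := qFact_ne hq s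
    have n4 := (qInt_pos hq d).ne'; have n5 := (qInt_pos hq s).ne'
    field_simp
    skip
  · rw [Nat.sub_self, qInt_zero, qBinom_of_gt (Nat.lt_succ_self s)]
    ring
  · rw [qBinom_of_gt (by omega), qBinom_of_gt (by omega)]
    ring

/-- `[n-s]·[n,s] = [n]·[n-1,s]` -/
lemma absorb2 (hq : |q| < 1) (n s : ℕ) :
    qInt q (n-s) * qBinom q n s = qInt q n * qBinom q (n-1) s := by
  rcases lt_trichotomy s n with h | rfl | h
  · rcases Nat.exists_eq_add_of_lt h with ⟨d, rfl⟩
    have e2 : s + d + 1 - 1 = s + d := by omega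
    have e3 : s + d + 1 - s = d + 1 := by omega
    have e4 : s + d - s = d := by omega
    simp only [qBinom, if_pos (by omega : s ≤ s+d+1), if_pos (by omega : s ≤ s+d), e2, e3, e4]
    rw [show s+d+1 = (s+d)+1 by omega, qFact_succ (s+d), qFact_succ d]
    have n1 := qFact_ne hq (s+d); have n2 := qFact_ne hq d; have n3 := qFact_ne hq s
    have n4 := (qInt_pos hq d).ne'; have n5 := (qInt_pos hq (s+d)).ne'
    field_simp
    skip
  · rw [Nat.sub_self, qInt_zero]
    rcases Nat.eq_zero_or_pos s with rfl | hs
    · simp [qInt_zero]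
    · rw [qBinom_of_gt (show s - 1 < s by omega)]
      ring
  · rw [qBinom_of_gt (by omega), qBinom_of_gt (by omega)]
    ring


lemma qHermite_rec (n : ℕ) (z : ℝ) :
    qHermite q (n+1) z = z * qHermite q n z - qInt q n * qHermite q (n-1) z := by
  cases n with
  | zero => simp [qHermite, qInt_zero]
  | succ n => rfl

lemma qPoch_zero (a : ℝ) : qPoch a q 0 = 1 := by simp [qPoch]

lemma qPoch_succ (a : ℝ) (n : ℕ) : qPoch a q (n+1) = qPoch a q n * (1 - a * q^n) := by
  simp [qPoch, Finset.prod_range_succ]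

variable {ρ x y : ℝ}

lemma fac_pos (hq : |q| < 1) (hρ : |ρ| < 1) (j : ℕ) : 0 < 1 - ρ^2 * q^j := by
  have a1 : q ^ j ≤ |q| ^ j := by rw [← abs_pow]; exact le_abs_self _
  have a2 : |q| ^ j ≤ 1 := pow_le_one₀ (abs_nonneg _) hq.le
  have a5 : ρ^2 * q^j ≤ ρ^2 * |q|^j := mul_le_mul_of_nonneg_left a1 (sq_nonneg ρ)
  have a6 : ρ^2 * |q|^j ≤ ρ^2 * 1 := mul_le_mul_of_nonneg_left a2 (sq_nonneg ρ)
  have a7 : ρ^2 < 1 := by rw [← sq_abs]; nlinarith [abs_nonneg ρ]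
  linarith

lemma qPoch_pos (hq : |q| < 1) (hρ : |ρ| < 1) (n : ℕ) : 0 < qPoch (ρ^2) q n :=
  Finset.prod_pos fun j _ => fac_pos hq hρ j

lemma qPoch_ne (hq : |q| < 1) (hρ : |ρ| < 1) (n : ℕ) : qPoch (ρ^2) q n ≠ 0 :=
  (qPoch_pos hq hρ n).ne'

/-- `D_n = P_n/(ρ²;q)_n`. -/
def Dfun (q ρ x y : ℝ) (n : ℕ) : ℝ := ASC q y ρ n x / qPoch (ρ^2) q n

lemma D_rec (hq : |q| < 1) (hρ : |ρ| < 1) (n : ℕ) :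
    (1 - ρ^2 * q^n) * Dfun q ρ x y (n+1)
      = (x - ρ*y*q^n) * Dfun q ρ x y n - qInt q n * Dfun q ρ x y (n-1) := by
  cases n with
  | zero =>
    have hne : (1:ℝ) - ρ^2 ≠ 0 := by
      have := fac_pos (q := q) (ρ := ρ) hq hρ 0
      rw [pow_zero, mul_one] at this
      linarith
    simp only [Dfun, ASC, qPoch_succ, qPoch_zero, qInt_zero, pow_zero, mul_one]
    field_simp
    simp
  | succ n =>
    have hP : ASC q y ρ (n+2) x = (x - ρ*y*q^(n+1)) * ASC q y ρ (n+1) x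
        - (1 - ρ^2*q^n) * qInt q (n+1) * ASC q y ρ n x := rfl
    simp only [Dfun, Nat.add_sub_cancel, hP, qPoch_succ]
    have h0 := qPoch_ne hq hρ n
    have h1 := (fac_pos (q := q) (ρ := ρ) hq hρ n).ne'
    have h2 := (fac_pos (q := q) (ρ := ρ) hq hρ (n+1)).ne'
    field_simp
    skip

/-- coefficient `A_{k,s}`. -/
def Acoef (q ρ y : ℝ) (k s : ℕ) : ℝ :=
  (-1)^s * q^(s*(s-1)/2) * qBinom q k s * ρ^s * qHermite q (k-s) y

lemma Acoef_zero {k s : ℕ} (h : k < s) : Acoef q ρ y k s = 0 := by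
  simp [Acoef, qBinom_of_gt h]

lemma Qmk_eq (m k : ℕ) :
    Qmk q ρ m k x y = ∑ s ∈ Finset.range (k+1), Acoef q ρ y k s * Dfun q ρ x y (m+s) := by
  unfold Qmk Acoef Dfun
  exact Finset.sum_congr rfl fun s _ => by rw [mul_div_assoc]

lemma Qmk_ext {m k N : ℕ} (h : k + 1 ≤ N) :
    Qmk q ρ m k x y = ∑ s ∈ Finset.range N, Acoef q ρ y k s * Dfun q ρ x y (m+s) := by
  rw [Qmk_eq]
  apply Finset.sum_subset (Finset.range_subset_range.2 h)
  intro t ht ht'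
  rw [Acoef_zero (by simp only [Finset.mem_range] at ht ht' ⊢; omega)]
  ring

lemma tri_succ (s : ℕ) : (s+1)*((s+1)-1)/2 = s*(s-1)/2 + s := by
  rw [← Nat.choose_two_right, ← Nat.choose_two_right]
  have h := Nat.choose_succ_succ s 1
  rw [Nat.choose_one_right] at h
  norm_num at h ⊢
  omega

lemma A_step (hq : |q| < 1) (k s : ℕ) :
    Acoef q ρ y (k+2) (s+1) = y * Acoef q ρ y (k+1) (s+1)
      - qInt q (k+1) * Acoef q ρ y k (s+1) - ρ * q^(k+1) * Acoef q ρ y (k+1) s := by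
  rcases lt_trichotomy s (k+1) with h | rfl | h
  · obtain ⟨d, rfl⟩ : ∃ d, k = s + d := ⟨k - s, by omega⟩
    have e1 : s + d + 2 - (s+1) = d + 1 := by omega
    have e2 : s + d + 1 - (s+1) = d := by omega
    have e3 : s + d - (s+1) = d - 1 := by omega
    have e4 : s + d + 1 - s = d + 1 := by omega
    have P := pascal1 (q := q) hq (s+d+1) s
    rw [e4] at P
    have Hr := qHermite_rec (q := q) d y
    have Ab := absorb2 (q := q) hq (s+d+1) (s+1)
    rw [e2, show s+d+1-1 = s+d by omega] at Ab
    unfold Acoef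
    rw [tri_succ, e1, e2, e3, e4, show s+d+1+1 = s+d+2 by omega]
    rw [pow_add]
    linear_combination ((-1:ℝ))^(s+1) * ρ^(s+1) * (q^(s*(s-1)/2) * q^s) * qHermite q (d+1) y * P
      + ((-1:ℝ))^(s+1) * ρ^(s+1) * (q^(s*(s-1)/2) * q^s) * qBinom q (s+d+1) (s+1) * Hr
      - ((-1:ℝ))^(s+1) * ρ^(s+1) * (q^(s*(s-1)/2) * q^s) * qHermite q (d-1) y * Ab
  · rw [Acoef_zero (show k+1 < k+1+1 by omega), Acoef_zero (show k < k+1+1 by omega)]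
    unfold Acoef
    rw [tri_succ, Nat.sub_self, Nat.sub_self, qBinom_self _ hq, qBinom_self _ hq, pow_add]
    ring
  · rw [Acoef_zero (show k+2 < s+1 by omega), Acoef_zero (show k+1 < s+1 by omega),
      Acoef_zero (show k < s+1 by omega), Acoef_zero (show k+1 < s by omega)]
    ring


/-- shift padding -/
def Bpad {M : Type*} [Zero M] (f : ℕ → M) : ℕ → M
  | 0 => 0
  | (s+1) => f s

@[simp] lemma Bpad_zero {M : Type*} [Zero M] (f : ℕ → M) : Bpad f 0 = 0 := rfl
@[simp] lemma Bpad_succ {M : Type*} [Zero M] (f : ℕ → M) (s : ℕ) : Bpad f (s+1) = f s := rfl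

lemma sum_shift {M : Type*} [AddCommMonoid M] (f : ℕ → M) (n : ℕ) :
    ∑ t ∈ Finset.range (n+1), Bpad f t = ∑ s ∈ Finset.range n, f s := by
  rw [Finset.sum_range_succ' (Bpad f) n]
  simp

lemma QR2 (hq : |q| < 1) (m k : ℕ) :
    Qmk q ρ m (k+1) x y = y * Qmk q ρ m k x y - qInt q k * Qmk q ρ m (k-1) x y
      - ρ * q^k * Qmk q ρ (m+1) k x y := by
  cases k with
  | zero =>
    simp only [Nat.zero_sub, qInt_zero, zero_mul, sub_zero, pow_zero]
    simp only [Qmk, Finset.sum_range_succ, Finset.sum_range_zero]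
    norm_num [qHermite, qBinom_zero _ hq, qBinom_self _ hq]
    ring
  | succ k =>
    set D := Dfun q ρ x y with hD
    have hG : Qmk q ρ (m+1) (k+1) x y
        = ∑ t ∈ Finset.range (k+3),
            Bpad (fun s => Acoef q ρ y (k+1) s * D (m+1+s)) t := by
      rw [show k+3 = k+2+1 by omega, sum_shift, Qmk_eq]
    rw [show k+1-1 = k by omega]
    rw [Qmk_ext (show (k+1)+1 ≤ k+3 by omega), Qmk_ext (show k+1 ≤ k+3 by omega),
      hG, show (k+1)+1 = k+2 by omega, Qmk_eq]
    rw [Finset.mul_sum, Finset.mul_sum, Finset.mul_sum, ← Finset.sum_sub_distrib,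
      ← Finset.sum_sub_distrib]
    apply Finset.sum_congr rfl
    intro t ht
    match t with
    | 0 =>
      simp only [Bpad_zero]
      simp only [add_zero]
      have h0 : ∀ j : ℕ, Acoef q ρ y j 0 = qHermite q j y := by
        intro j
        simp [Acoef, qBinom_zero _ hq]
      rw [h0, h0, h0]
      have := qHermite_rec (q := q) (k+1) y
      rw [show k+1-1 = k by omega] at this
      rw [show k+1+1 = k+2 by omega] at this
      linear_combination D m * this
    | (s+1) =>
      simp only [Bpad_succ]
      rw [show m+(s+1) = m+1+s by omega]
      linear_combination D (m+1+s) * A_step (q := q) (ρ := ρ) (y := y) hq k s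


lemma qInt_one : qInt q 1 = 1 := by simp [qInt]

lemma Qmk_zero (hq : |q| < 1) (a : ℕ) : Qmk q ρ a 0 x y = Dfun q ρ x y a := by
  rw [Qmk_eq]
  simp [Acoef, qBinom_zero _ hq, qHermite]

lemma Qmk_one (hq : |q| < 1) (a : ℕ) :
    Qmk q ρ a 1 x y = y * Dfun q ρ x y a - ρ * Dfun q ρ x y (a+1) := by
  rw [Qmk_eq]
  simp [Finset.sum_range_succ, Acoef, qBinom_zero _ hq, qBinom_self _ hq, qHermite]
  ring

lemma QR1 (hq : |q| < 1) (hρ : |ρ| < 1) :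
    ∀ k m, Qmk q ρ (m+1) k x y = x * Qmk q ρ m k x y - qInt q m * Qmk q ρ (m-1) k x y
      - ρ * q^m * Qmk q ρ m (k+1) x y := by
  intro k
  induction k using Nat.twoStepInduction with
  | zero =>
    intro m
    rw [Qmk_zero (ρ := ρ) (x := x) (y := y) hq, Qmk_zero (ρ := ρ) (x := x) (y := y) hq, Qmk_zero (ρ := ρ) (x := x) (y := y) hq, Qmk_one (ρ := ρ) (x := x) (y := y) hq]
    linear_combination D_rec (x := x) (y := y) hq hρ m
  | one =>
    intro m
    have E2 := QR2 (ρ := ρ) (x := x) (y := y) hq m 1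
    rw [qInt_one] at E2
    rw [Qmk_zero (ρ := ρ) (x := x) (y := y) hq] at E2
    rw [E2, Qmk_one (ρ := ρ) (x := x) (y := y) hq (m+1), Qmk_one (ρ := ρ) (x := x) (y := y) hq m, Qmk_one (ρ := ρ) (x := x) (y := y) hq (m-1)]
    rcases m with _ | n
    · have d0 := D_rec (x := x) (y := y) hq hρ 0
      have d1 := D_rec (x := x) (y := y) hq hρ 1
      rw [qInt_one] at d1
      simp only [qInt_zero, zero_mul, sub_zero, pow_zero, mul_one, Nat.zero_sub] at *
      linear_combination y * d0 - ρ * d1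
    · have d0 := D_rec (x := x) (y := y) hq hρ (n+1)
      have d1 := D_rec (x := x) (y := y) hq hρ (n+2)
      rw [show qInt q (n+2) = qInt q (n+1) + q^(n+1) from by
        rw [show n+2 = n+1+1 by omega, qInt_succ]] at d1
      rw [show n+2-1 = n+1 by omega] at d1
      rw [show n+1-1 = n by omega] at d0
      rw [show n+1-1 = n by omega, show n+1+1 = n+2 by omega]
      rw [show n+2+1 = n+3 by omega]
      rw [show n+2+1 = n+3 by omega] at d1
      linear_combination y * d0 - ρ * d1
  | more k0 ih0 ih1 =>
    intro m
    have hsk : qInt q (k0+2) = qInt q (k0+1) + q^(k0+1) := by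
      rw [show k0+2 = k0+1+1 by omega, qInt_succ]
    have E : ∀ a, Qmk q ρ a (k0+2) x y = y * Qmk q ρ a (k0+1) x y
        - qInt q (k0+1) * Qmk q ρ a k0 x y - ρ*q^(k0+1) * Qmk q ρ (a+1) (k0+1) x y := by
      intro a
      have h := QR2 (ρ := ρ) (x := x) (y := y) hq a (k0+1)
      rw [show k0+1+1 = k0+2 by omega] at h
      rwa [Nat.add_sub_cancel] at h
    rcases m with _ | n
    · -- m = 0
      have E3 := QR2 (ρ := ρ) (x := x) (y := y) hq 0 (k0+2)
      rw [show k0+2-1 = k0+1 by omega, hsk] at E3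
      simp only [show (0:ℕ)+1 = 1 from rfl] at E3
      simp only [show (0:ℕ)+1 = 1 from rfl, show (0:ℕ)-1 = 0 from rfl, qInt_zero,
        zero_mul, sub_zero, pow_zero, one_mul]
      rw [E3, E 1, E 0]
      have h_a := ih1 0
      have h_b := ih0 0
      have h_c := ih1 1
      simp only [show (0:ℕ)+1 = 1 from rfl, show (0:ℕ)-1 = 0 from rfl, qInt_zero,
        zero_mul, sub_zero, pow_zero, one_mul] at h_a h_b
      rw [show k0+1+1 = k0+2 by omega, E 0] at h_a
      simp only [show (1:ℕ)+1 = 2 from rfl, show (1:ℕ)-1 = 0 from rfl, qInt_one,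
        one_mul, pow_one] at h_c
      rw [show k0+1+1 = k0+2 by omega, E 1] at h_c
      simp only [show (1:ℕ)+1 = 2 from rfl] at h_c
      linear_combination y * h_a - qInt q (k0+1) * h_b - ρ * q^(k0+1) * h_c
    · -- m = n+1
      have hsn : qInt q (n+2) = qInt q (n+1) + q^(n+1) := by
        rw [show n+2 = n+1+1 by omega, qInt_succ]
      have E3 := QR2 (ρ := ρ) (x := x) (y := y) hq (n+1) (k0+2)
      rw [show k0+2-1 = k0+1 by omega, hsk, show n+1+1 = n+2 by omega] at E3
      rw [show n+1-1 = n by omega, show n+1+1 = n+2 by omega]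
      rw [E3, E (n+2), E (n+1), E n]
      rw [show n+2+1 = n+3 by omega, show n+1+1 = n+2 by omega]
      have h_a := ih1 (n+1)
      have h_b := ih0 (n+1)
      have h_c := ih1 (n+2)
      rw [show n+1-1 = n by omega, show n+1+1 = n+2 by omega,
        show k0+1+1 = k0+2 by omega, E (n+1)] at h_a
      rw [show n+1+1 = n+2 by omega] at h_a
      rw [show n+1-1 = n by omega, show n+1+1 = n+2 by omega] at h_b
      rw [show n+2-1 = n+1 by omega, show n+2+1 = n+3 by omega,
        show k0+1+1 = k0+2 by omega, hsn, E (n+2)] at h_c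
      rw [show n+2+1 = n+3 by omega] at h_c
      linear_combination y * h_a - qInt q (k0+1) * h_b - ρ * q^(k0+1) * h_c


lemma QR3 (hq : |q| < 1) (hρ : |ρ| < 1) (m k : ℕ) :
    (1 - ρ^2*q^(m+k)) * Qmk q ρ (m+1) k x y
      = (x - ρ*q^m*y) * Qmk q ρ m k x y - qInt q m * Qmk q ρ (m-1) k x y
        + ρ*q^m*qInt q k * Qmk q ρ m (k-1) x y := by
  linear_combination QR1 (x := x) (y := y) hq hρ k m
    - ρ*q^m * QR2 (ρ := ρ) (x := x) (y := y) hq m k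

lemma QR3' (hq : |q| < 1) (hρ : |ρ| < 1) (m k : ℕ) :
    (1 - ρ^2*q^(m+k)) * Qmk q ρ m (k+1) x y
      = (y - ρ*q^k*x) * Qmk q ρ m k x y - qInt q k * Qmk q ρ m (k-1) x y
        + ρ*q^k*qInt q m * Qmk q ρ (m-1) k x y := by
  linear_combination QR2 (ρ := ρ) (x := x) (y := y) hq m k
    - ρ*q^k * QR1 (x := x) (y := y) hq hρ k m

lemma Qmk00 (hq : |q| < 1) : Qmk q ρ 0 0 x y = 1 := by
  rw [Qmk_zero (ρ := ρ) (x := x) (y := y) hq]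
  simp [Dfun, ASC, qPoch_zero]

/-- Uniqueness: two double sequences satisfying the two three-term recurrences and
agreeing at (0,0) are equal. -/
lemma unique (hq : |q| < 1) (hρ : |ρ| < 1) (F G : ℕ → ℕ → ℝ)
    (hF3 : ∀ m k, (1 - ρ^2*q^(m+k)) * F (m+1) k
      = (x - ρ*q^m*y) * F m k - qInt q m * F (m-1) k + ρ*q^m*qInt q k * F m (k-1))
    (hF3' : ∀ m k, (1 - ρ^2*q^(m+k)) * F m (k+1)
      = (y - ρ*q^k*x) * F m k - qInt q k * F m (k-1) + ρ*q^k*qInt q m * F (m-1) k)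
    (hG3 : ∀ m k, (1 - ρ^2*q^(m+k)) * G (m+1) k
      = (x - ρ*q^m*y) * G m k - qInt q m * G (m-1) k + ρ*q^m*qInt q k * G m (k-1))
    (hG3' : ∀ m k, (1 - ρ^2*q^(m+k)) * G m (k+1)
      = (y - ρ*q^k*x) * G m k - qInt q k * G m (k-1) + ρ*q^k*qInt q m * G (m-1) k)
    (h00 : F 0 0 = G 0 0) : ∀ m k, F m k = G m k := by
  have hne : ∀ n : ℕ, (1 - ρ^2*q^n) ≠ 0 := fun n => (fac_pos hq hρ n).ne'
  have row0 : ∀ k, F 0 k = G 0 k := by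
    have H : ∀ k, F 0 k = G 0 k ∧ F 0 (k+1) = G 0 (k+1) := by
      intro k
      induction k with
      | zero =>
        refine ⟨h00, ?_⟩
        have hf := hF3' 0 0
        have hg := hG3' 0 0
        simp only [qInt_zero, zero_mul, mul_zero, add_zero] at hf hg
        apply mul_left_cancel₀ (show (1 - ρ^2*q^((0:ℕ)+0)) ≠ 0 from hne 0)
        linear_combination hf - hg + (y - ρ*q^(0:ℕ)*x) * h00
      | succ k ih =>
        refine ⟨ih.2, ?_⟩
        have hf := hF3' 0 (k+1)
        have hg := hG3' 0 (k+1)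
        rw [show k+1-1 = k by omega] at hf hg
        simp only [qInt_zero, zero_mul, mul_zero, add_zero] at hf hg
        apply mul_left_cancel₀ (show (1 - ρ^2*q^((0:ℕ)+(k+1))) ≠ 0 from hne _)
        linear_combination hf - hg + (y - ρ*q^(k+1)*x) * ih.2 - qInt q (k+1) * ih.1
    exact fun k => (H k).1
  have rows : ∀ m, (∀ k, F m k = G m k) ∧ (∀ k, F (m+1) k = G (m+1) k) := by
    intro m
    induction m with
    | zero =>
      refine ⟨row0, fun k => ?_⟩
      have hf := hF3 0 k
      have hg := hG3 0 k
      simp only [qInt_zero, zero_mul, mul_zero, sub_zero] at hf hg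
      apply mul_left_cancel₀ (show (1 - ρ^2*q^((0:ℕ)+k)) ≠ 0 from hne _)
      linear_combination hf - hg + (x - ρ*q^(0:ℕ)*y) * row0 k
        + ρ*q^(0:ℕ)*qInt q k * row0 (k-1)
    | succ m ih =>
      refine ⟨ih.2, fun k => ?_⟩
      have hf := hF3 (m+1) k
      have hg := hG3 (m+1) k
      rw [show m+1-1 = m by omega] at hf hg
      apply mul_left_cancel₀ (show (1 - ρ^2*q^((m+1)+k)) ≠ 0 from hne _)
      linear_combination hf - hg + (x - ρ*q^(m+1)*y) * ih.2 k - qInt q (m+1) * ih.1 k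
        + ρ*q^(m+1)*qInt q k * ih.2 (k-1)
  exact fun m k => (rows m).1 k

/-- Symmetry of `Q`. -/
lemma Qmk_symm (hq : |q| < 1) (hρ : |ρ| < 1) (m k : ℕ) :
    Qmk q ρ m k x y = Qmk q ρ k m y x := by
  have h := unique (x := x) (y := y) hq hρ (fun m k => Qmk q ρ m k x y)
    (fun m k => Qmk q ρ k m y x)
    (fun m k => QR3 hq hρ m k) (fun m k => QR3' hq hρ m k)
    (fun m k => by
      have h := QR3' (x := y) (y := x) hq hρ k m
      rw [show k+m = m+k by omega] at h
      linear_combination h)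
    (fun m k => by
      have h := QR3 (x := y) (y := x) hq hρ k m
      rw [show k+m = m+k by omega] at h
      linear_combination h)
    (by rw [Qmk00 hq, Qmk00 hq])
  exact h m k


lemma weier (a : ℕ → ℝ) (h0 : ∀ i, 0 ≤ a i) (h1 : ∀ i, a i ≤ 1) (n : ℕ) :
    1 - ∑ i ∈ Finset.range n, a i ≤ ∏ i ∈ Finset.range n, (1 - a i) := by
  induction n with
  | zero => simp
  | succ n ih =>
    rw [Finset.prod_range_succ, Finset.sum_range_succ]
    have hp : (0:ℝ) ≤ ∏ i ∈ Finset.range n, (1 - a i) :=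
      Finset.prod_nonneg fun i _ => by linarith [h1 i]
    have hp1 : ∏ i ∈ Finset.range n, (1 - a i) ≤ 1 :=
      Finset.prod_le_one (fun i _ => by linarith [h1 i]) (fun i _ => by linarith [h0 i])
    nlinarith [h0 n, h1 n]

lemma prodLB {t : ℝ} (ht0 : 0 ≤ t) (ht1 : t < 1) :
    ∃ c > 0, ∀ n, c ≤ ∏ i ∈ Finset.range n, (1 - t^(i+1)) := by
  obtain ⟨N, hN⟩ := exists_pow_lt_of_lt_one (show (0:ℝ) < (1-t)/2 by linarith) ht1
  have hfac : ∀ i : ℕ, 0 < 1 - t^(i+1) := fun i => by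
    have : t^(i+1) < 1 := pow_lt_one₀ ht0 ht1 (by omega)
    linarith
  have hfac1 : ∀ i : ℕ, 1 - t^(i+1) ≤ 1 := fun i => by
    have : 0 ≤ t^(i+1) := pow_nonneg ht0 _
    linarith
  have hgeo : ∀ M : ℕ, ∑ i ∈ Finset.range M, t^i ≤ 1/(1-t) := by
    intro M
    have h1 : (0:ℝ) < 1 - t := by linarith
    have h2 : ∑ i ∈ Finset.range M, t^i = (1-t^M)/(1-t) := by
      rw [geom_sum_eq (by intro hc; rw [hc] at ht1; linarith : t ≠ 1)]
      rw [div_eq_div_iff (by linarith) (by linarith)]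
      ring
    rw [h2]
    gcongr
    · nlinarith [pow_nonneg ht0 M]
  set P := ∏ i ∈ Finset.range N, (1 - t^(i+1)) with hP
  have hPpos : 0 < P := Finset.prod_pos fun i _ => hfac i
  refine ⟨P/2, by positivity, fun n => ?_⟩
  rcases le_or_gt n N with h | h
  · have key : P ≤ ∏ i ∈ Finset.range n, (1 - t^(i+1)) := by
      rw [hP, show N = n + (N - n) by omega, Finset.prod_range_add]
      have h2 : ∏ i ∈ Finset.range (N-n), (1 - t^(n+i+1)) ≤ 1 :=
        Finset.prod_le_one (fun i _ => (by rw [show n+i+1 = (n+i)+1 by omega]; exact (hfac (n+i)).le))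
          (fun i _ => by rw [show n+i+1 = (n+i)+1 by omega]; exact hfac1 (n+i))
      have h25 : (0:ℝ) ≤ ∏ i ∈ Finset.range (N-n), (1 - t^(n+i+1)) :=
        Finset.prod_nonneg (fun i _ => by rw [show n+i+1 = (n+i)+1 by omega]; exact (hfac (n+i)).le)
      have h3 : (0:ℝ) ≤ ∏ i ∈ Finset.range n, (1 - t^(i+1)) :=
        Finset.prod_nonneg fun i _ => (hfac i).le
      nlinarith
    linarith
  · rw [show n = N + (n - N) by omega, Finset.prod_range_add]
    have key : (1:ℝ)/2 ≤ ∏ i ∈ Finset.range (n-N), (1 - t^(N+i+1)) := by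
      have hw := weier (fun i => t^(N+i+1)) (fun i => pow_nonneg ht0 _)
        (fun i => pow_le_one₀ ht0 ht1.le) (n-N)
      have hsum : ∑ i ∈ Finset.range (n-N), t^(N+i+1) ≤ 1/2 := by
        have e : ∑ i ∈ Finset.range (n-N), t^(N+i+1)
            = t^(N+1) * ∑ i ∈ Finset.range (n-N), t^i := by
          rw [Finset.mul_sum]
          exact Finset.sum_congr rfl fun i _ => by rw [show N+i+1 = (N+1)+i by omega, pow_add]
        rw [e]
        have h1 : t^(N+1) * ∑ i ∈ Finset.range (n-N), t^i ≤ t^(N+1) * (1/(1-t)) :=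
          mul_le_mul_of_nonneg_left (hgeo _) (pow_nonneg ht0 _)
        have h2 : t^(N+1) ≤ t^N := by
          calc t^(N+1) = t^N * t := by ring
          _ ≤ t^N * 1 := mul_le_mul_of_nonneg_left ht1.le (pow_nonneg ht0 _)
          _ = t^N := by ring
        have h3 : t^(N+1) * (1/(1-t)) ≤ t^N * (1/(1-t)) :=
          mul_le_mul_of_nonneg_right h2 (one_div_nonneg.mpr (by linarith))
        have h4 : t^N * (1/(1-t)) ≤ 1/2 := by
          rw [mul_one_div, div_le_div_iff₀ (by linarith) (by norm_num)]
          nlinarith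
        linarith
      linarith [hw]
    have hpr : (0:ℝ) ≤ ∏ i ∈ Finset.range (n-N), (1 - t^(N+i+1)) := by linarith
    nlinarith [hPpos]


lemma geo_le {t : ℝ} (ht0 : 0 ≤ t) (ht1 : t < 1) (M : ℕ) :
    ∑ i ∈ Finset.range M, t^i ≤ 1/(1-t) := by
  have h1 : (0:ℝ) < 1 - t := by linarith
  have h2 : ∑ i ∈ Finset.range M, t^i = (1-t^M)/(1-t) := by
    rw [geom_sum_eq (by intro hc; rw [hc] at ht1; linarith : t ≠ 1)]
    rw [div_eq_div_iff (by linarith) (by linarith)]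
    ring
  rw [h2]
  gcongr
  nlinarith [pow_nonneg ht0 M]

lemma qInt_nn {t : ℝ} (ht0 : 0 ≤ t) (M : ℕ) : 0 ≤ qInt t M :=
  Finset.sum_nonneg fun i _ => pow_nonneg ht0 i

lemma qInt_le {t : ℝ} (ht0 : 0 ≤ t) (ht1 : t < 1) (M : ℕ) : qInt t M ≤ 1/(1-t) :=
  geo_le ht0 ht1 M

lemma qBinom_nonneg {t : ℝ} (ht0 : 0 ≤ t) (ht1 : t < 1) (n j : ℕ) : 0 ≤ qBinom t n j := by
  have habs : |t| < 1 := by rwa [abs_of_nonneg ht0]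
  unfold qBinom
  split
  · have := qFact_pos habs n
    have := qFact_pos habs (n-j)
    have := qFact_pos habs j
    positivity
  · exact le_refl 0

lemma qBinom_abs (hq : |q| < 1) (n : ℕ) : ∀ j, |qBinom q n j| ≤ qBinom |q| n j := by
  have h1 : |(|q|)| < 1 := by rwa [abs_abs]
  induction n with
  | zero =>
    intro j
    cases j with
    | zero => rw [qBinom_zero _ hq, qBinom_zero _ h1]; norm_num
    | succ j => rw [qBinom_of_gt (by omega), qBinom_of_gt (by omega)]; norm_num
  | succ n ih =>
    intro j
    cases j with
    | zero => rw [qBinom_zero _ hq, qBinom_zero _ h1]; norm_num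
    | succ j =>
      rw [pascal2 hq n j, pascal2 h1 n j]
      calc |q^(j+1) * qBinom q n (j+1) + qBinom q n j|
          ≤ |q^(j+1) * qBinom q n (j+1)| + |qBinom q n j| := abs_add_le _ _
        _ = |q|^(j+1) * |qBinom q n (j+1)| + |qBinom q n j| := by rw [abs_mul, abs_pow]
        _ ≤ |q|^(j+1) * qBinom |q| n (j+1) + qBinom |q| n j :=
            add_le_add (mul_le_mul_of_nonneg_left (ih (j+1))
              (pow_nonneg (abs_nonneg q) _)) (ih j)

lemma qBinom_le {t : ℝ} (ht0 : 0 ≤ t) (ht1 : t < 1) {c : ℝ} (hc : 0 < c)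
    (hcb : ∀ M, c ≤ ∏ i ∈ Finset.range M, (1 - t^(i+1))) (n j : ℕ) :
    qBinom t n j ≤ 1/c := by
  have habs : |t| < 1 := by rwa [abs_of_nonneg ht0]
  rcases le_or_gt j n with h | h
  · obtain ⟨d, rfl⟩ : ∃ d, n = d + j := ⟨n - j, by omega⟩
    rw [qBinom, if_pos h, show d+j-j = d by omega]
    have key1 : qFact t (d+j) ≤ qFact t d * (1/(1-t))^j := by
      unfold qFact
      rw [Finset.prod_range_add]
      apply mul_le_mul_of_nonneg_left _ (Finset.prod_nonneg fun i _ => qInt_nn ht0 _)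
      calc ∏ i ∈ Finset.range j, qInt t (d+i+1)
          ≤ ∏ i ∈ Finset.range j, (1/(1-t)) :=
            Finset.prod_le_prod (fun i _ => qInt_nn ht0 _) (fun i _ => qInt_le ht0 ht1 _)
        _ = (1/(1-t))^j := by rw [Finset.prod_const, Finset.card_range]
    have prodid : (1-t)^j * qFact t j = ∏ i ∈ Finset.range j, (1 - t^(i+1)) := by
      unfold qFact
      rw [show (1-t)^j = ∏ _i ∈ Finset.range j, (1-t) from by
        rw [Finset.prod_const, Finset.card_range]]
      rw [← Finset.prod_mul_distrib]
      exact Finset.prod_congr rfl fun i _ => geom_qInt (i+1)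
    have hfd := qFact_pos habs d
    have hfj := qFact_pos habs j
    have h1t : (0:ℝ) < 1 - t := by linarith
    have hprod : c ≤ (1-t)^j * qFact t j := by rw [prodid]; exact hcb j
    rw [div_le_div_iff₀ (by positivity) hc]
    calc qFact t (d+j) * c ≤ (qFact t d * (1/(1-t))^j) * ((1-t)^j * qFact t j) := by
          apply mul_le_mul key1 hprod hc.le
          positivity
      _ = qFact t d * qFact t j := by
          field_simp
          rw [← mul_pow, one_div_mul_cancel h1t.ne', one_pow]
      _ = 1 * (qFact t d * qFact t j) := by ring
  · rw [qBinom_of_gt h]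
    positivity

/-- `(1-q^{N-i})·[N,i] = (1-q^N)·[N-1,i]` -/
lemma coeff_id (hq : |q| < 1) (N i : ℕ) :
    (1 - q^(N-i)) * qBinom q N i = (1 - q^N) * qBinom q (N-1) i := by
  have h1 := absorb2 hq N i
  have g1 := geom_qInt (q := q) (N-i)
  have g2 := geom_qInt (q := q) N
  linear_combination (-(qBinom q N i)) * g1 + (1-q) * h1 + qBinom q (N-1) i * g2


lemma comb (hq : |q| < 1) {u v : ℂ} (huv : u * v = 1) (n : ℕ) :
    ∑ j ∈ Finset.range (n+3), ((qBinom q (n+2) j : ℝ) : ℂ) * u^(n+2-j) * v^j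
      = (u + v) * ∑ j ∈ Finset.range (n+2), ((qBinom q (n+1) j : ℝ) : ℂ) * u^(n+1-j) * v^j
        - (1 - (q:ℂ)^(n+1)) * ∑ j ∈ Finset.range (n+1), ((qBinom q n j : ℝ) : ℂ) * u^(n-j) * v^j := by
  set c : ℕ → ℕ → ℂ := fun N j => ((qBinom q N j : ℝ) : ℂ) with hc
  have split : ∀ j ∈ Finset.range (n+3), c (n+2) j * u^(n+2-j) * v^j
      = c (n+1) j * u^(n+2-j) * v^j
        + Bpad (fun i => (q:ℂ)^(n+1-i) * c (n+1) i * u^(n+1-i) * v^(i+1)) j := by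
    intro j hj
    cases j with
    | zero =>
      simp only [Bpad_zero, add_zero, hc]
      rw [qBinom_zero _ hq, qBinom_zero _ hq]
    | succ i =>
      simp only [Bpad_succ, hc]
      have P := pascal1 (q := q) hq (n+1) i
      rw [show n+2-(i+1) = n+1-i by omega]
      push_cast [P]
      ring
  rw [Finset.sum_congr rfl split, Finset.sum_add_distrib]
  rw [show n+3 = (n+2)+1 by omega, sum_shift]
  have S1 : ∑ j ∈ Finset.range (n+2+1), c (n+1) j * u^(n+2-j) * v^j
      = u * ∑ j ∈ Finset.range (n+2), c (n+1) j * u^(n+1-j) * v^j := by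
    rw [Finset.sum_range_succ, show c (n+1) (n+2) = 0 from by
      simp [hc, qBinom_of_gt (show n+1 < n+2 by omega)]]
    rw [Finset.mul_sum]
    simp only [zero_mul, mul_zero, add_zero]
    apply Finset.sum_congr rfl
    intro j hj
    have hjle : j ≤ n+1 := by simpa [Nat.lt_succ_iff] using hj
    rw [show n+2-j = (n+1-j)+1 by omega, pow_succ]
    ring
  have S2 : ∑ i ∈ Finset.range (n+2), (q:ℂ)^(n+1-i) * c (n+1) i * u^(n+1-i) * v^(i+1)
      = v * (∑ j ∈ Finset.range (n+2), c (n+1) j * u^(n+1-j) * v^j)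
        - (1 - (q:ℂ)^(n+1)) * ∑ j ∈ Finset.range (n+1), c n j * u^(n-j) * v^j := by
    have key : v * (∑ j ∈ Finset.range (n+2), c (n+1) j * u^(n+1-j) * v^j)
        - ∑ i ∈ Finset.range (n+2), (q:ℂ)^(n+1-i) * c (n+1) i * u^(n+1-i) * v^(i+1)
        = (1 - (q:ℂ)^(n+1)) * ∑ j ∈ Finset.range (n+1), c n j * u^(n-j) * v^j := by
      rw [Finset.mul_sum, ← Finset.sum_sub_distrib]
      have point : ∀ j ∈ Finset.range (n+2),
          v * (c (n+1) j * u^(n+1-j) * v^j) - (q:ℂ)^(n+1-j) * c (n+1) j * u^(n+1-j) * v^(j+1)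
          = (1 - (q:ℂ)^(n+1-j)) * c (n+1) j * u^(n+1-j) * v^(j+1) := fun j _ => by ring
      rw [Finset.sum_congr rfl point]
      rw [Finset.sum_range_succ, show n+1-(n+1) = 0 by omega]
      simp only [pow_zero, sub_self, zero_mul]
      rw [add_zero, Finset.mul_sum]
      apply Finset.sum_congr rfl
      intro j hj
      have hjle : j ≤ n := by simpa [Nat.lt_succ_iff] using hj
      have ci := coeff_id (q := q) hq (n+1) j
      rw [show n+1-1 = n by omega] at ci
      have ciC : (1 - (q:ℂ)^(n+1-j)) * c (n+1) j = (1 - (q:ℂ)^(n+1)) * c n j := by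
        simp only [hc]
        exact_mod_cast congrArg (fun r : ℝ => (r : ℂ)) ci
      rw [show n+1-j = (n-j)+1 by omega] at ciC ⊢
      rw [pow_succ u (n-j), pow_succ v j]
      calc (1 - (q:ℂ)^(n-j+1)) * c (n+1) j * (u^(n-j) * u) * (v^j * v)
          = ((1 - (q:ℂ)^(n-j+1)) * c (n+1) j) * (u^(n-j) * v^j) * (u*v) := by ring
        _ = ((1 - (q:ℂ)^(n+1)) * c n j) * (u^(n-j) * v^j) * 1 := by rw [ciC, huv]
        _ = (1 - (q:ℂ)^(n+1)) * (c n j * u^(n-j) * v^j) := by ring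
    linear_combination -key
  rw [S1, S2]
  ring


lemma rep (hq : |q| < 1) {z θ : ℝ} (hzs : z * Real.sqrt (1-q) = 2 * Real.cos θ) :
    ∀ n, ((qHermite q n z : ℝ) : ℂ) * ((Real.sqrt (1-q) : ℝ) : ℂ)^n
      = ∑ j ∈ Finset.range (n+1), ((qBinom q n j : ℝ) : ℂ)
          * (Complex.exp ((θ:ℂ) * Complex.I))^(n-j)
          * (Complex.exp (((-θ : ℝ):ℂ) * Complex.I))^j := by
  have h1q : (0:ℝ) < 1 - q := by rcases abs_lt.1 hq with ⟨h1, h2⟩; linarith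
  set u := Complex.exp ((θ:ℂ) * Complex.I) with hu
  set v := Complex.exp (((-θ : ℝ):ℂ) * Complex.I) with hv
  have huv : u * v = 1 := by
    rw [hu, hv, ← Complex.exp_add, show (θ:ℂ) * Complex.I + ((-θ : ℝ):ℂ) * Complex.I = 0 by
      push_cast; ring, Complex.exp_zero]
  have hzC : (z:ℂ) * ((Real.sqrt (1-q):ℝ):ℂ) = 2 * ((Real.cos θ : ℝ):ℂ) := by
    exact_mod_cast congrArg (fun r : ℝ => (r : ℂ)) hzs
  have hC4 : u + v = (z:ℂ) * ((Real.sqrt (1-q) : ℝ):ℂ) := by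
    rw [hu, hv, Complex.exp_mul_I, Complex.exp_mul_I]
    push_cast
    rw [Complex.cos_neg, Complex.sin_neg, ← Complex.ofReal_cos]
    push_cast at hzC ⊢
    linear_combination -hzC
  intro n
  induction n using Nat.twoStepInduction with
  | zero =>
    simp [qHermite, qBinom_zero _ hq]
  | one =>
    have e1 : qHermite q 1 z = z := by simp [qHermite]
    rw [e1, pow_one, Finset.sum_range_succ, Finset.sum_range_succ, Finset.sum_range_zero,
      qBinom_zero _ hq, qBinom_self _ hq]
    simp only [pow_zero, pow_one, Nat.sub_self, zero_add]
    push_cast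
    linear_combination -hC4
  | more n ih0 ih1 =>
    have hrec : qHermite q (n+2) z
        = z * qHermite q (n+1) z - qInt q (n+1) * qHermite q n z := rfl
    have hC1 : ((qHermite q (n+2) z : ℝ) : ℂ)
        = (z:ℂ) * ((qHermite q (n+1) z : ℝ):ℂ)
          - ((qInt q (n+1) : ℝ):ℂ) * ((qHermite q n z : ℝ):ℂ) := by
      rw [hrec]; push_cast; ring
    have hC2 : ((qInt q (n+1) : ℝ):ℂ) * ((1-q : ℝ):ℂ) = 1 - (q:ℂ)^(n+1) := by
      have hg := geom_qInt (q := q) (n+1)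
      have h2 : ((qInt q (n+1) * (1-q) : ℝ) : ℂ) = ((1 - q^(n+1) : ℝ) : ℂ) := by
        exact_mod_cast congrArg (fun r : ℝ => (r : ℂ))
          (by linarith : qInt q (n+1) * (1-q) = 1 - q^(n+1))
      push_cast at h2
      push_cast
      linear_combination h2
    have hC3 : (((Real.sqrt (1-q) : ℝ):ℂ))^2 = ((1-q : ℝ):ℂ) := by
      rw [show (((Real.sqrt (1-q) : ℝ):ℂ))^2
        = (((Real.sqrt (1-q))^2 : ℝ) : ℂ) by push_cast; ring]
      rw [Real.sq_sqrt h1q.le]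
    rw [show n+2+1 = n+3 by omega, comb hq huv n, ← ih1, ← ih0]
    linear_combination (((Real.sqrt (1-q) : ℝ):ℂ))^(n+2) * hC1
      - ((qHermite q (n+1) z : ℝ):ℂ) * (((Real.sqrt (1-q) : ℝ):ℂ))^(n+1) * hC4
      - ((qHermite q n z : ℝ):ℂ) * (((Real.sqrt (1-q) : ℝ):ℂ))^n * hC2
      - ((qInt q (n+1) : ℝ):ℂ) * ((qHermite q n z : ℝ):ℂ)
          * (((Real.sqrt (1-q) : ℝ):ℂ))^n * hC3

lemma hermite_growth (hq : |q| < 1) {z : ℝ} (hz : z ∈ Sq q) :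
    ∃ C : ℝ, 1 ≤ C ∧ ∀ n : ℕ,
      |qHermite q n z| ≤ C * ((n:ℝ)+1) * ((Real.sqrt (1-q))⁻¹)^n := by
  have h1q : (0:ℝ) < 1 - q := by rcases abs_lt.1 hq with ⟨h1, h2⟩; linarith
  have hs : 0 < Real.sqrt (1-q) := Real.sqrt_pos.mpr h1q
  set s := Real.sqrt (1-q) with hsdef
  obtain ⟨hz1, hz2⟩ := Set.mem_Icc.1 hz
  have h2s : (2/s)*s = 2 := div_mul_cancel₀ 2 hs.ne'
  have hb1 : -1 ≤ z*s/2 := by nlinarith [mul_le_mul_of_nonneg_right hz1 hs.le]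
  have hb2 : z*s/2 ≤ 1 := by nlinarith [mul_le_mul_of_nonneg_right hz2 hs.le]
  have hcos : Real.cos (Real.arccos (z*s/2)) = z*s/2 := Real.cos_arccos hb1 hb2
  have hzs : z * s = 2 * Real.cos (Real.arccos (z*s/2)) := by rw [hcos]; ring
  have hrep := rep hq hzs
  obtain ⟨c, hc, hcb⟩ := prodLB (abs_nonneg q) hq
  refine ⟨max (1/c) 1, le_max_right _ _, fun n => ?_⟩
  have key : |qHermite q n z| * s^n ≤ ((n:ℝ)+1) * (1/c) := by
    have h1 : ‖((qHermite q n z : ℝ) : ℂ) * ((s : ℝ) : ℂ)^n‖ = |qHermite q n z| * s^n := by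
      rw [norm_mul, norm_pow, Complex.norm_real, Complex.norm_real, Real.norm_eq_abs,
        Real.norm_eq_abs, abs_of_pos hs]
    rw [← h1, hrep n]
    refine le_trans (norm_sum_le _ _) ?_
    have hterm : ∀ j ∈ Finset.range (n+1),
        ‖((qBinom q n j : ℝ) : ℂ)
          * (Complex.exp ((((Real.arccos (z*s/2)) : ℝ):ℂ) * Complex.I))^(n-j)
          * (Complex.exp (((-(Real.arccos (z*s/2)) : ℝ):ℂ) * Complex.I))^j‖ ≤ 1/c := by
      intro j hj
      simp only [norm_mul, norm_pow, Complex.norm_exp_ofReal_mul_I,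
        one_pow, mul_one, Complex.norm_real, Real.norm_eq_abs]
      calc |qBinom q n j| ≤ qBinom |q| n j := qBinom_abs hq n j
        _ ≤ 1/c := qBinom_le (abs_nonneg q) hq hc hcb n j
    calc ∑ j ∈ Finset.range (n+1), ‖((qBinom q n j : ℝ) : ℂ)
          * (Complex.exp ((((Real.arccos (z*s/2)) : ℝ):ℂ) * Complex.I))^(n-j)
          * (Complex.exp (((-(Real.arccos (z*s/2)) : ℝ):ℂ) * Complex.I))^j‖
        ≤ ∑ _j ∈ Finset.range (n+1), 1/c := Finset.sum_le_sum hterm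
      _ = ((n:ℝ)+1) * (1/c) := by
          rw [Finset.sum_const, Finset.card_range, nsmul_eq_mul]
          push_cast
          ring
  have hsn : (0:ℝ) < s^n := pow_pos hs n
  rw [inv_pow]
  calc |qHermite q n z| = |qHermite q n z| * s^n * (s^n)⁻¹ := by field_simp
    _ ≤ (((n:ℝ)+1) * (1/c)) * (s^n)⁻¹ :=
        mul_le_mul_of_nonneg_right key (inv_nonneg.2 hsn.le)
    _ ≤ (max (1/c) 1 * ((n:ℝ)+1)) * (s^n)⁻¹ := by
        apply mul_le_mul_of_nonneg_right _ (inv_nonneg.2 hsn.le)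
        rw [mul_comm]
        apply mul_le_mul_of_nonneg_right (le_max_left _ _) (by positivity)
    _ = max (1/c) 1 * ((n:ℝ)+1) * (s^n)⁻¹ := by ring


lemma qInt_abs_le (hq : |q| < 1) (j : ℕ) : |qInt q j| ≤ 1/(1-|q|) := by
  calc |qInt q j| ≤ ∑ i ∈ Finset.range j, |q^i| := Finset.abs_sum_le_sum_abs _ _
    _ = qInt |q| j := by unfold qInt; exact Finset.sum_congr rfl fun i _ => abs_pow q i
    _ ≤ 1/(1-|q|) := qInt_le (abs_nonneg q) hq j

lemma qFact_lb (hq : |q| < 1) : ∃ c : ℝ, 0 < c ∧ ∀ j, c * ((1-q)⁻¹)^j ≤ qFact q j := by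
  have h1q : (0:ℝ) < 1 - q := by rcases abs_lt.1 hq with ⟨h1, h2⟩; linarith
  obtain ⟨c, hc, hcb⟩ := prodLB (abs_nonneg q) hq
  refine ⟨c, hc, fun j => ?_⟩
  have key : ∀ i : ℕ, (1-|q|^(i+1)) * (1-q)⁻¹ ≤ qInt q (i+1) := by
    intro i
    have hg := geom_qInt (q := q) (i+1)
    have hqi : q^(i+1) ≤ |q|^(i+1) := by rw [← abs_pow]; exact le_abs_self _
    rw [show qInt q (i+1) = (1-q^(i+1)) * (1-q)⁻¹ from by
      field_simp; linarith [hg]]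
    apply mul_le_mul_of_nonneg_right (by linarith) (inv_nonneg.2 h1q.le)
  have hnn : ∀ i : ℕ, (0:ℝ) ≤ (1-|q|^(i+1)) * (1-q)⁻¹ := fun i => by
    have : |q|^(i+1) < 1 := pow_lt_one₀ (abs_nonneg q) hq (by omega)
    exact mul_nonneg (by linarith) (inv_nonneg.2 h1q.le)
  calc c * ((1-q)⁻¹)^j ≤ (∏ i ∈ Finset.range j, (1-|q|^(i+1))) * ((1-q)⁻¹)^j := by
        apply mul_le_mul_of_nonneg_right (hcb j) (pow_nonneg (inv_nonneg.2 h1q.le) j)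
    _ = ∏ i ∈ Finset.range j, ((1-|q|^(i+1)) * (1-q)⁻¹) := by
        rw [Finset.prod_mul_distrib, Finset.prod_const, Finset.card_range]
    _ ≤ ∏ i ∈ Finset.range j, qInt q (i+1) :=
        Finset.prod_le_prod (fun i _ => hnn i) (fun i _ => key i)
    _ = qFact q j := rfl

lemma summable_of_poly_geom {f : ℕ → ℝ} {K r : ℝ} (hr : |r| < 1)
    (hf : ∀ j, |f j| ≤ K * ((j:ℝ)+1)^2 * |r|^j) : Summable f := by
  have h2 : Summable (fun j : ℕ => ((j:ℝ))^2 * |r|^j) :=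
    summable_pow_mul_geometric_of_norm_lt_one 2 (by rwa [Real.norm_eq_abs, abs_abs])
  have h1 : Summable (fun j : ℕ => ((j:ℝ))^1 * |r|^j) :=
    summable_pow_mul_geometric_of_norm_lt_one 1 (by rwa [Real.norm_eq_abs, abs_abs])
  have h0 : Summable (fun j : ℕ => |r|^j) :=
    summable_geometric_of_lt_one (abs_nonneg r) hr
  have hsum : Summable (fun j : ℕ => K * (((j:ℝ)+1)^2 * |r|^j)) := by
    have e : (fun j : ℕ => ((j:ℝ)+1)^2 * |r|^j)
        = fun j : ℕ => ((j:ℝ))^2 * |r|^j + 2*(((j:ℝ))^1 * |r|^j) + |r|^j :=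
      funext fun j => by ring
    exact (Summable.mul_left K (by rw [e]; exact (h2.add (h1.mul_left 2)).add h0))
  apply Summable.of_norm
  apply Summable.of_nonneg_of_le (fun j => norm_nonneg _) _ hsum
  intro j
  rw [Real.norm_eq_abs]
  calc |f j| ≤ K * ((j:ℝ)+1)^2 * |r|^j := hf j
    _ = K * (((j:ℝ)+1)^2 * |r|^j) := by ring

lemma summable_helper (hq : |q| < 1) (hρ : |ρ| < 1) (g h w : ℕ → ℝ) (C1 C2 W : ℝ)
    (hC1 : 0 ≤ C1) (hC2 : 0 ≤ C2) (hW : 0 ≤ W)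
    (hg : ∀ j, |g j| ≤ C1 * ((j:ℝ)+1) * ((Real.sqrt (1-q))⁻¹)^j)
    (hh : ∀ j, |h j| ≤ C2 * ((j:ℝ)+1) * ((Real.sqrt (1-q))⁻¹)^j)
    (hw : ∀ j, |w j| ≤ W) :
    Summable (fun j => ρ^j * w j / qFact q j * g j * h j) := by
  have h1q : (0:ℝ) < 1 - q := by rcases abs_lt.1 hq with ⟨h1, h2⟩; linarith
  have hs : 0 < Real.sqrt (1-q) := Real.sqrt_pos.mpr h1q
  set B := (Real.sqrt (1-q))⁻¹ with hB
  have hBpos : 0 < B := by positivity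
  obtain ⟨c, hc, hclb⟩ := qFact_lb hq
  have hBB : (1-q) * (B*B) = 1 := by
    rw [hB, ← Real.sqrt_mul_self h1q.le]
    field_simp
    rw [Real.sq_sqrt (Real.sqrt_nonneg _)]
  apply summable_of_poly_geom (K := W * (C1*C2) * c⁻¹) hρ
  intro j
  have fct : (qFact q j)⁻¹ ≤ c⁻¹*(1-q)^j := by
    have h1 := hclb j
    have h2 : (0:ℝ) < c * ((1-q)⁻¹)^j := by positivity
    have h3 := one_div_le_one_div_of_le h2 h1
    rw [one_div, one_div, mul_inv, inv_pow, inv_inv] at h3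
    exact h3
  have habs : |ρ^j * w j / qFact q j * g j * h j|
      = |ρ|^j * |w j| * (qFact q j)⁻¹ * |g j| * |h j| := by
    rw [abs_mul, abs_mul, abs_div, abs_mul, abs_pow,
      abs_of_pos (qFact_pos hq j)]
    ring
  rw [habs]
  calc |ρ|^j * |w j| * (qFact q j)⁻¹ * |g j| * |h j|
      ≤ |ρ|^j * W * (c⁻¹*(1-q)^j) * (C1 * ((j:ℝ)+1) * B^j) * (C2 * ((j:ℝ)+1) * B^j) := by
        have p1 : (0:ℝ) ≤ |ρ|^j := by positivity
        have p2 : (0:ℝ) ≤ (qFact q j)⁻¹ := (inv_nonneg).2 (qFact_pos hq j).le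
        have p3 : (0:ℝ) ≤ c⁻¹*(1-q)^j := by positivity
        have p4 : (0:ℝ) ≤ C1 * ((j:ℝ)+1) * B^j := by positivity
        apply mul_le_mul _ (hh j) (abs_nonneg _) (by positivity)
        apply mul_le_mul _ (hg j) (abs_nonneg _) (by positivity)
        apply mul_le_mul _ fct p2 (by positivity)
        exact mul_le_mul_of_nonneg_left (hw j) p1
    _ = (W * (C1*C2) * c⁻¹) * ((j:ℝ)+1)^2 * |ρ|^j * ((1-q)*(B*B))^j := by
        rw [mul_pow (1-q)]
        ring
    _ = (W * (C1*C2) * c⁻¹) * ((j:ℝ)+1)^2 * |ρ|^j := by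
        rw [hBB, one_pow, mul_one]

lemma hermite_growth' (hq : |q| < 1) {z : ℝ} (hz : z ∈ Sq q) :
    ∃ C : ℝ, 1 ≤ C ∧ ∀ n : ℕ,
      |qHermite q (n-1) z| ≤ C * ((n:ℝ)+1) * ((Real.sqrt (1-q))⁻¹)^n := by
  have h1q : (0:ℝ) < 1 - q := by rcases abs_lt.1 hq with ⟨h1, h2⟩; linarith
  have hs : 0 < Real.sqrt (1-q) := Real.sqrt_pos.mpr h1q
  set B := (Real.sqrt (1-q))⁻¹ with hB
  have hBpos : 0 < B := by positivity
  have hBs : B * Real.sqrt (1-q) = 1 := inv_mul_cancel₀ hs.ne'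
  obtain ⟨C, hC1, hC⟩ := hermite_growth hq hz
  have hmax : (1:ℝ) ≤ max 1 (Real.sqrt (1-q)) := le_max_left _ _
  have hmax2 : Real.sqrt (1-q) ≤ max 1 (Real.sqrt (1-q)) := le_max_right _ _
  refine ⟨C * max 1 (Real.sqrt (1-q)), by nlinarith, fun n => ?_⟩
  cases n with
  | zero =>
    have : qHermite q (0-1) z = 1 := rfl
    rw [this]
    simp only [pow_zero, Nat.cast_zero]
    rw [abs_one]
    nlinarith
  | succ i =>
    rw [show i+1-1 = i by omega]
    calc |qHermite q i z| ≤ C * ((i:ℝ)+1) * B^i := hC i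
      _ = C * ((i:ℝ)+1) * (B^(i+1) * Real.sqrt (1-q)) := by
          rw [show B^(i+1) * Real.sqrt (1-q) = B^i from by
            rw [pow_succ, mul_assoc, hBs, mul_one]]
      _ ≤ C * max 1 (Real.sqrt (1-q)) * (((i:ℕ):ℝ)+1+1) * B^(i+1) := by
          have hBp : (0:ℝ) < B^(i+1) := pow_pos hBpos _
          have hCpos : (0:ℝ) < C := by linarith
          have hin : (0:ℝ) ≤ (i:ℝ)+1 := by positivity
          have step1 : ((i:ℝ)+1)*Real.sqrt (1-q) ≤ ((i:ℝ)+1+1)*(max 1 (Real.sqrt (1-q))) := by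
            nlinarith [mul_le_mul_of_nonneg_left hmax2 hin]
          calc C * ((i:ℝ)+1) * (B^(i+1) * Real.sqrt (1-q))
              = (C*B^(i+1)) * (((i:ℝ)+1)*Real.sqrt (1-q)) := by ring
            _ ≤ (C*B^(i+1)) * (((i:ℝ)+1+1)*(max 1 (Real.sqrt (1-q)))) :=
                mul_le_mul_of_nonneg_left step1 (mul_nonneg hCpos.le hBp.le)
            _ = C * max 1 (Real.sqrt (1-q)) * (((i:ℕ):ℝ)+1+1) * B^(i+1) := by ring
      _ = C * max 1 (Real.sqrt (1-q)) * (((i+1:ℕ):ℝ)+1) * B^(i+1) := by push_cast; ring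

lemma Hshift_bound (hq : |q| < 1) {z : ℝ} (hz : z ∈ Sq q) (m : ℕ) :
    ∃ C : ℝ, 0 ≤ C
      ∧ (∀ j : ℕ, |qHermite q (j+m) z| ≤ C * ((j:ℝ)+1) * ((Real.sqrt (1-q))⁻¹)^j)
      ∧ (∀ j : ℕ, |qHermite q ((j+m)-1) z| ≤ C * ((j:ℝ)+1) * ((Real.sqrt (1-q))⁻¹)^j) := by
  have h1q : (0:ℝ) < 1 - q := by rcases abs_lt.1 hq with ⟨h1, h2⟩; linarith
  have hs : 0 < Real.sqrt (1-q) := Real.sqrt_pos.mpr h1q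
  set B := (Real.sqrt (1-q))⁻¹ with hB
  have hBpos : 0 < B := by positivity
  obtain ⟨C1, hC11, hC1⟩ := hermite_growth hq hz
  obtain ⟨C2, hC21, hC2⟩ := hermite_growth' hq hz
  refine ⟨(C1+C2) * ((m:ℝ)+1) * B^m, by positivity, fun j => ?_, fun j => ?_⟩
  · calc |qHermite q (j+m) z| ≤ C1 * (((j+m:ℕ):ℝ)+1) * B^(j+m) := hC1 (j+m)
      _ ≤ ((C1+C2) * ((m:ℝ)+1) * B^m) * ((j:ℝ)+1) * B^j := by
          rw [pow_add]
          push_cast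
          have hBp : (0:ℝ) < B^j := pow_pos hBpos _
          have hBm : (0:ℝ) < B^m := pow_pos hBpos _
          nlinarith [mul_pos hBp hBm, mul_nonneg (mul_nonneg (by linarith : (0:ℝ) ≤ C2)
            (by positivity : (0:ℝ) ≤ ((j:ℝ)+1)*((m:ℝ)+1))) (mul_pos hBp hBm).le,
            mul_nonneg (by linarith : (0:ℝ) ≤ C1)
              (mul_nonneg (by positivity : (0:ℝ) ≤ (j:ℝ)*(m:ℝ)) (mul_pos hBp hBm).le)]
  · calc |qHermite q ((j+m)-1) z| ≤ C2 * (((j+m:ℕ):ℝ)+1) * B^(j+m) := hC2 (j+m)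
      _ ≤ ((C1+C2) * ((m:ℝ)+1) * B^m) * ((j:ℝ)+1) * B^j := by
          rw [pow_add]
          push_cast
          have hBp : (0:ℝ) < B^j := pow_pos hBpos _
          have hBm : (0:ℝ) < B^m := pow_pos hBpos _
          nlinarith [mul_pos hBp hBm, mul_nonneg (mul_nonneg (by linarith : (0:ℝ) ≤ C1)
            (by positivity : (0:ℝ) ≤ ((j:ℝ)+1)*((m:ℝ)+1))) (mul_pos hBp hBm).le,
            mul_nonneg (by linarith : (0:ℝ) ≤ C2)
              (mul_nonneg (by positivity : (0:ℝ) ≤ (j:ℝ)*(m:ℝ)) (mul_pos hBp hBm).le)]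


lemma gammaR1 (hq : |q| < 1) (hρ : |ρ| < 1) (hx : x ∈ Sq q) (hy : y ∈ Sq q) (m k : ℕ) :
    gammamk q ρ (m+1) k x y
      = x * gammamk q ρ m k x y - qInt q m * gammamk q ρ (m-1) k x y
        - ρ*q^m * gammamk q ρ m (k+1) x y := by
  have h1aq : (0:ℝ) < 1 - |q| := by linarith [abs_nonneg q]
  obtain ⟨CX, hCX0, hCXa, hCXb⟩ := Hshift_bound hq hx m
  obtain ⟨CY, hCY0, hCYa, hCYb⟩ := Hshift_bound hq hy k
  have ha : Summable (fun j => ρ^j / qFact q j * qHermite q (j+m) x * qHermite q (j+k) y) := by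
    have h := summable_helper hq hρ (fun j => qHermite q (j+m) x)
      (fun j => qHermite q (j+k) y) (fun _ => (1:ℝ)) CX CY 1 hCX0 hCY0 zero_le_one
      hCXa hCYa (fun j => by norm_num)
    have e : (fun j => ρ^j * (1:ℝ) / qFact q j * qHermite q (j+m) x * qHermite q (j+k) y)
        = (fun j => ρ^j / qFact q j * qHermite q (j+m) x * qHermite q (j+k) y) :=
      funext fun j => by ring
    rwa [e] at h
  have hb : Summable (fun j => ρ^j / qFact q j * qHermite q ((j+m)-1) x * qHermite q (j+k) y) := by
    have h := summable_helper hq hρ (fun j => qHermite q ((j+m)-1) x)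
      (fun j => qHermite q (j+k) y) (fun _ => (1:ℝ)) CX CY 1 hCX0 hCY0 zero_le_one
      hCXb hCYa (fun j => by norm_num)
    have e : (fun j => ρ^j * (1:ℝ) / qFact q j * qHermite q ((j+m)-1) x * qHermite q (j+k) y)
        = (fun j => ρ^j / qFact q j * qHermite q ((j+m)-1) x * qHermite q (j+k) y) :=
      funext fun j => by ring
    rwa [e] at h
  have hcc : Summable (fun j => ρ^j * qInt q j / qFact q j
      * qHermite q ((j+m)-1) x * qHermite q (j+k) y) :=
    summable_helper hq hρ (fun j => qHermite q ((j+m)-1) x)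
      (fun j => qHermite q (j+k) y) (fun j => qInt q j) CX CY (1/(1-|q|)) hCX0 hCY0
      (by positivity) hCXb hCYa (fun j => qInt_abs_le hq j)
  have hpoint : ∀ j : ℕ, ρ^j / qFact q j * qHermite q (j+(m+1)) x * qHermite q (j+k) y
      = x * (ρ^j / qFact q j * qHermite q (j+m) x * qHermite q (j+k) y)
        - qInt q m * (ρ^j / qFact q j * qHermite q ((j+m)-1) x * qHermite q (j+k) y)
        - q^m * (ρ^j * qInt q j / qFact q j * qHermite q ((j+m)-1) x * qHermite q (j+k) y) := by
    intro j
    rw [show j+(m+1) = (j+m)+1 by omega, qHermite_rec (j+m) x,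
      show qInt q (j+m) = qInt q m + q^m * qInt q j from by
        rw [show j+m = m+j by omega, qInt_add]]
    ring
  have h1 : gammamk q ρ (m+1) k x y
      = ∑' j : ℕ, (x * (ρ^j / qFact q j * qHermite q (j+m) x * qHermite q (j+k) y)
        - qInt q m * (ρ^j / qFact q j * qHermite q ((j+m)-1) x * qHermite q (j+k) y)
        - q^m * (ρ^j * qInt q j / qFact q j * qHermite q ((j+m)-1) x * qHermite q (j+k) y)) := by
    unfold gammamk
    exact tsum_congr hpoint
  rw [h1, Summable.tsum_sub ((ha.mul_left x).sub (hb.mul_left (qInt q m))) (hcc.mul_left (q^m)),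
    Summable.tsum_sub (ha.mul_left x) (hb.mul_left (qInt q m)), tsum_mul_left, tsum_mul_left,
    tsum_mul_left]
  have hA : (∑' j : ℕ, (ρ^j / qFact q j * qHermite q (j+m) x * qHermite q (j+k) y))
      = gammamk q ρ m k x y := rfl
  have hC : (∑' j : ℕ, (ρ^j * qInt q j / qFact q j * qHermite q ((j+m)-1) x
      * qHermite q (j+k) y)) = ρ * gammamk q ρ m (k+1) x y := by
    rw [hcc.tsum_eq_zero_add]
    have hshift : ∀ j : ℕ, ρ^(j+1) * qInt q (j+1) / qFact q (j+1)
        * qHermite q (((j+1)+m)-1) x * qHermite q ((j+1)+k) y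
        = ρ * (ρ^j / qFact q j * qHermite q (j+m) x * qHermite q (j+(k+1)) y) := by
      intro j
      rw [qFact_succ j, show ((j+1)+m)-1 = j+m by omega, show (j+1)+k = j+(k+1) by omega,
        pow_succ]
      have hne1 : qInt q (j+1) ≠ 0 := (qInt_pos hq j).ne'
      have hne2 : qFact q j ≠ 0 := qFact_ne hq j
      field_simp
      skip
    rw [tsum_congr hshift, tsum_mul_left]
    have h0 : ρ^0 * qInt q 0 / qFact q 0 * qHermite q ((0+m)-1) x * qHermite q (0+k) y = 0 := by
      simp [qInt_zero]
    rw [h0, zero_add]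
    rfl
  cases m with
  | zero =>
    simp only [qInt_zero, zero_mul, sub_zero]
    rw [hA, hC]
    ring
  | succ n =>
    have hB : (∑' j : ℕ, (ρ^j / qFact q j * qHermite q ((j+(n+1))-1) x * qHermite q (j+k) y))
        = gammamk q ρ n k x y := by
      apply tsum_congr
      intro j
      rw [show (j+(n+1))-1 = j+n by omega]
    rw [show n+1-1 = n by omega, hA, hB, hC]
    ring


lemma gamma_swap (m k : ℕ) : gammamk q ρ m k x y = gammamk q ρ k m y x :=
  tsum_congr fun j => by ring

lemma gammaR2 (hq : |q| < 1) (hρ : |ρ| < 1) (hx : x ∈ Sq q) (hy : y ∈ Sq q) (m k : ℕ) :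
    gammamk q ρ m (k+1) x y
      = y * gammamk q ρ m k x y - qInt q k * gammamk q ρ m (k-1) x y
        - ρ*q^k * gammamk q ρ (m+1) k x y := by
  have h := gammaR1 (x := y) (y := x) hq hρ hy hx k m
  have e1 : gammamk q ρ m (k+1) x y = gammamk q ρ (k+1) m y x := gamma_swap m (k+1)
  have e2 : gammamk q ρ k m y x = gammamk q ρ m k x y := (gamma_swap m k).symm
  have e3 : gammamk q ρ (k-1) m y x = gammamk q ρ m (k-1) x y := (gamma_swap m (k-1)).symm
  have e4 : gammamk q ρ k (m+1) y x = gammamk q ρ (m+1) k x y := (gamma_swap (m+1) k).symm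
  rw [e1, h, e2, e3, e4]

lemma gammaR3 (hq : |q| < 1) (hρ : |ρ| < 1) (hx : x ∈ Sq q) (hy : y ∈ Sq q) (m k : ℕ) :
    (1 - ρ^2*q^(m+k)) * gammamk q ρ (m+1) k x y
      = (x - ρ*q^m*y) * gammamk q ρ m k x y - qInt q m * gammamk q ρ (m-1) k x y
        + ρ*q^m*qInt q k * gammamk q ρ m (k-1) x y := by
  linear_combination gammaR1 hq hρ hx hy m k - ρ*q^m * gammaR2 hq hρ hx hy m k

lemma gammaR3' (hq : |q| < 1) (hρ : |ρ| < 1) (hx : x ∈ Sq q) (hy : y ∈ Sq q) (m k : ℕ) :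
    (1 - ρ^2*q^(m+k)) * gammamk q ρ m (k+1) x y
      = (y - ρ*q^k*x) * gammamk q ρ m k x y - qInt q k * gammamk q ρ m (k-1) x y
        + ρ*q^k*qInt q m * gammamk q ρ (m-1) k x y := by
  linear_combination gammaR2 hq hρ hx hy m k - ρ*q^k * gammaR1 hq hρ hx hy m k

end St14

/-- `γ_{m,k} = γ_{0,0}·Q_{m,k}` and the symmetry `Q_{m,k}(x,y) = Q_{k,m}(y,x)`. -/
theorem gammamk_eq_gamma_zero_mul_Qmk (q ρ x y : ℝ) (hq : |q| < 1) (hρ : |ρ| < 1)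
    (hx : x ∈ Sq q) (hy : y ∈ Sq q) (m k : ℕ) :
    gammamk q ρ m k x y = gammamk q ρ 0 0 x y * Qmk q ρ m k x y ∧
    Qmk q ρ m k x y = Qmk q ρ k m y x := by
  constructor
  · refine St14.unique (x := x) (y := y) hq hρ (fun m k => gammamk q ρ m k x y)
      (fun m k => gammamk q ρ 0 0 x y * Qmk q ρ m k x y)
      (fun m k => St14.gammaR3 hq hρ hx hy m k)
      (fun m k => St14.gammaR3' hq hρ hx hy m k)
      (fun m k => by
        linear_combination gammamk q ρ 0 0 x y * St14.QR3 (x := x) (y := y) hq hρ m k)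
      (fun m k => by
        linear_combination gammamk q ρ 0 0 x y * St14.QR3' (x := x) (y := y) hq hρ m k)
      ?_ m k
    rw [St14.Qmk00 hq]
    ring
  · exact St14.Qmk_symm hq hρ m k
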